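/- For an odd natural number n, the number of primitive representations r₂⁰(n) = (1/4)·#{(a,b) ∈ ℤ² : gcd(a,b)=1, a²+b²=n} equals 2^k if n is a product of powers of k distinct primes all congruent to 1 mod 4 (with k ≥ 0), and equals 0 otherwise. -/

import Mathlib

lemma sqrt_neg_one_lift {p : ℕ} (hp : p.Prime) (h4 : p % 4 = 1) (e : ℕ) :
    ∃ s : ℤ, (p : ℤ) ^ (e + 1) ∣ s ^ 2 + 1 := by
  haveI : Fact p.Prime := ⟨hp⟩
  have hpI : Prime (p : ℤ) := Nat.prime_iff_prime_int.mp hp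
  induction e with
  | zero =>
    obtain ⟨y, hy⟩ := (ZMod.exists_sq_eq_neg_one_iff (p := p)).mpr (by omega)
    refine ⟨(y.val : ℤ), ?_⟩
    have h0 : (((y.val : ℤ) ^ 2 + 1 : ℤ) : ZMod p) = 0 := by
      push_cast
      simp only [ZMod.natCast_val, ZMod.cast_id]
      rw [sq, ← hy]; ring
    rw [pow_one]
    exact (ZMod.intCast_zmod_eq_zero_iff_dvd _ p).mp h0
  | succ e ih =>
    obtain ⟨s, c, hc⟩ := ih
    have hps : ¬ (p : ℤ) ∣ s := by
      intro h
      have h1 : (p : ℤ) ∣ s ^ 2 + 1 := dvd_trans (dvd_pow_self _ (Nat.succ_ne_zero e)) ⟨c, hc⟩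
      have h2 : (p : ℤ) ∣ s ^ 2 := dvd_pow h two_ne_zero
      exact hpI.not_dvd_one ((dvd_add_right h2).mp h1)
    have hcop : IsCoprime (p : ℤ) (2 * s) := by
      rw [hpI.coprime_iff_not_dvd]
      intro h
      rcases hpI.dvd_mul.mp h with h2 | hs
      · have : (p : ℕ) ∣ 2 := by exact_mod_cast h2
        have := Nat.le_of_dvd (by norm_num) this
        have := hp.two_le
        omega
      · exact hps hs
    obtain ⟨x, y, hxy⟩ := hcop
    refine ⟨s - c * y * (p : ℤ) ^ (e + 1), c * x + (c * y) ^ 2 * (p : ℤ) ^ e, ?_⟩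
    linear_combination hc - (p : ℤ) ^ (e + 1) * c * hxy

lemma cardR_pp {p e : ℕ} (hp : p.Prime) (he : 0 < e) (h4 : p % 4 = 1) :
    Nat.card {x : ZMod (p ^ e) // x ^ 2 = -1} = 2 := by
  haveI : Fact p.Prime := ⟨hp⟩
  have hpI : Prime (p : ℤ) := Nat.prime_iff_prime_int.mp hp
  obtain ⟨e, rfl⟩ : ∃ e', e = e' + 1 := ⟨e - 1, by omega⟩
  obtain ⟨s, hs⟩ := sqrt_neg_one_lift hp h4 e
  have hcast : ((p ^ (e + 1) : ℕ) : ℤ) = (p : ℤ) ^ (e + 1) := by push_cast; ring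
  set N := p ^ (e + 1) with hN
  set x₀ : ZMod N := (s : ZMod N) with hx₀
  have hsN : x₀ ^ 2 = -1 := by
    have h0 : ((s ^ 2 + 1 : ℤ) : ZMod N) = 0 := by
      rw [ZMod.intCast_zmod_eq_zero_iff_dvd, hcast]; exact hs
    push_cast at h0
    linear_combination h0
  have hps : ¬ (p : ℤ) ∣ s := by
    intro h
    have h1 : (p : ℤ) ∣ s ^ 2 + 1 := dvd_trans (dvd_pow_self _ (Nat.succ_ne_zero e)) hs
    have h2 : (p : ℤ) ∣ s ^ 2 := dvd_pow h two_ne_zero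
    exact hpI.not_dvd_one ((dvd_add_right h2).mp h1)
  have hp2 : ¬ (p : ℤ) ∣ 2 := by
    intro h2
    have : (p : ℕ) ∣ 2 := by exact_mod_cast h2
    have := Nat.le_of_dvd (by norm_num) this
    have := hp.two_le
    omega
  have hp2s : ¬ (p : ℤ) ∣ 2 * s := by
    intro h
    rcases hpI.dvd_mul.mp h with h | h
    · exact hp2 h
    · exact hps h
  have key : ∀ m : ℤ, (p : ℤ) ^ (e + 1) ∣ m ^ 2 + 1 →
      (p : ℤ) ^ (e + 1) ∣ m - s ∨ (p : ℤ) ^ (e + 1) ∣ m + s := by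
    intro m hm
    have hprod : (p : ℤ) ^ (e + 1) ∣ (m - s) * (m + s) := by
      have h' : (m - s) * (m + s) = (m ^ 2 + 1) - (s ^ 2 + 1) := by ring
      rw [h']
      exact dvd_sub hm hs
    by_cases h1 : (p : ℤ) ∣ m - s
    · left
      have h2 : ¬ (p : ℤ) ∣ m + s := by
        intro h2
        apply hp2s
        have := dvd_sub h2 h1
        have h3 : m + s - (m - s) = 2 * s := by ring
        rwa [h3] at this
      have hcop : IsCoprime ((p : ℤ) ^ (e + 1)) (m + s) :=
        (hpI.coprime_iff_not_dvd.mpr h2).pow_left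
      have hprod' : (p : ℤ) ^ (e + 1) ∣ (m + s) * (m - s) := by rwa [mul_comm]
      exact hcop.dvd_of_dvd_mul_left hprod'
    · right
      have hcop : IsCoprime ((p : ℤ) ^ (e + 1)) (m - s) :=
        (hpI.coprime_iff_not_dvd.mpr h1).pow_left
      exact hcop.dvd_of_dvd_mul_left hprod
  have hne : x₀ ≠ -x₀ := by
    intro h
    apply hp2s
    have h0 : ((2 * s : ℤ) : ZMod N) = 0 := by
      push_cast
      linear_combination h
    rw [ZMod.intCast_zmod_eq_zero_iff_dvd, hcast] at h0
    exact dvd_trans (dvd_pow_self _ (Nat.succ_ne_zero e)) h0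
  have hset : {x : ZMod N | x ^ 2 = -1} = {x₀, -x₀} := by
    ext x
    simp only [Set.mem_setOf_eq, Set.mem_insert_iff, Set.mem_singleton_iff]
    constructor
    · intro hx
      have hmx : (((x.val : ℤ)) : ZMod N) = x := by
        push_cast
        simp [ZMod.natCast_val, ZMod.cast_id]
      have hm : (p : ℤ) ^ (e + 1) ∣ (x.val : ℤ) ^ 2 + 1 := by
        rw [← hcast, ← ZMod.intCast_zmod_eq_zero_iff_dvd]
        push_cast
        simp only [ZMod.natCast_val, ZMod.cast_id]
        linear_combination hx
      rcases key _ hm with h | h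
      · left
        have h0 : (((x.val : ℤ) - s : ℤ) : ZMod N) = 0 := by
          rw [ZMod.intCast_zmod_eq_zero_iff_dvd, hcast]; exact h
        push_cast at h0
        simp only [ZMod.natCast_val, ZMod.cast_id] at h0
        linear_combination h0
      · right
        have h0 : (((x.val : ℤ) + s : ℤ) : ZMod N) = 0 := by
          rw [ZMod.intCast_zmod_eq_zero_iff_dvd, hcast]; exact h
        push_cast at h0
        simp only [ZMod.natCast_val, ZMod.cast_id] at h0
        linear_combination h0
    · rintro (rfl | rfl)
      · exact hsN
      · rw [neg_pow, hsN]; ring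
  have : Nat.card {x : ZMod N // x ^ 2 = -1} = Nat.card ({x₀, -x₀} : Set (ZMod N)) :=
    Nat.card_congr (Equiv.setCongr hset)
  rw [this, Nat.card_coe_set_eq, Set.ncard_pair hne]

lemma cardR_pp3 {p e : ℕ} (hp : p.Prime) (he : 0 < e) (h4 : p % 4 = 3) :
    IsEmpty {x : ZMod (p ^ e) // x ^ 2 = -1} := by
  haveI : Fact p.Prime := ⟨hp⟩
  constructor
  rintro ⟨x, hx⟩
  have hsq : IsSquare (-1 : ZMod p) := by
    refine ⟨ZMod.castHom (dvd_pow_self p he.ne') (ZMod p) x, ?_⟩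
    have := congrArg (ZMod.castHom (dvd_pow_self p he.ne') (ZMod p)) hx
    rw [map_pow, map_neg, map_one] at this
    rw [← this, sq]
  rw [ZMod.exists_sq_eq_neg_one_iff] at hsq
  exact hsq (by omega)

lemma cardR_mul {a b : ℕ} (h : Nat.Coprime a b) :
    Nat.card {x : ZMod (a * b) // x ^ 2 = -1} =
    Nat.card {x : ZMod a // x ^ 2 = -1} * Nat.card {x : ZMod b // x ^ 2 = -1} := by
  rw [← Nat.card_prod]
  apply Nat.card_congr
  have e := ZMod.chineseRemainder h
  refine ⟨fun x => (⟨(e x.1).1, ?_⟩, ⟨(e x.1).2, ?_⟩),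
         fun y => ⟨e.symm (y.1.1, y.2.1), ?_⟩, ?_, ?_⟩
  · have : (e x.1) ^ 2 = -1 := by rw [← map_pow, x.2, map_neg, map_one]
    have := congrArg Prod.fst this
    simpa using this
  · have : (e x.1) ^ 2 = -1 := by rw [← map_pow, x.2, map_neg, map_one]
    have := congrArg Prod.snd this
    simpa using this
  · rw [← map_pow]
    have : (y.1.1, y.2.1) ^ 2 = (-1 : ZMod a × ZMod b) := by
      have h1 := y.1.2
      have h2 := y.2.2
      simp [Prod.pow_mk, Prod.ext_iff, h1, h2]
    rw [this, map_neg, map_one]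
  · intro x
    ext
    simp
  · intro y
    ext <;> simp

theorem cardR (n : ℕ) (hodd : Odd n) :
    Nat.card {x : ZMod n // x ^ 2 = -1} =
    if ∀ p ∈ n.primeFactors, p % 4 = 1 then 2 ^ n.primeFactors.card else 0 := by
  induction n using Nat.recOnPosPrimePosCoprime with
  | prime_pow p e hp he =>
    have hpp : p.Prime := hp
    have hodd' : Odd p := hpp.odd_of_ne_two (by
      rintro rfl
      exact (Nat.not_odd_iff_even.mpr (Nat.even_pow.mpr ⟨even_two, he.ne'⟩)) hodd)
    have h4 : p % 4 = 1 ∨ p % 4 = 3 := by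
      have := hpp.two_le
      rcases hodd' with ⟨k, hk⟩
      omega
    rw [Nat.primeFactors_prime_pow he.ne' hpp]
    rcases h4 with h4 | h4
    · rw [if_pos (by simp [h4]), cardR_pp hpp he h4]
      simp
    · haveI := cardR_pp3 hpp he h4
      rw [if_neg (by simp [h4])]
      exact Nat.card_of_isEmpty
  | zero => exact absurd hodd (by simp)
  | one =>
    rw [if_pos (by simp)]
    simp only [Nat.primeFactors_one, Finset.card_empty, pow_zero]
    have : Unique {x : ZMod 1 // x ^ 2 = -1} :=
      ⟨⟨⟨0, Subsingleton.elim _ _⟩⟩, fun a => Subtype.ext (Subsingleton.elim _ _)⟩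
    exact Nat.card_unique
  | coprime a b ha hb hab iha ihb =>
    have hodda : Odd a := (Nat.Odd.of_mul_left hodd)
    have hoddb : Odd b := (Nat.Odd.of_mul_right hodd)
    rw [cardR_mul hab, iha hodda, ihb hoddb,
        Nat.primeFactors_mul (by omega) (by omega),
        Finset.card_union_of_disjoint (Nat.Coprime.disjoint_primeFactors hab)]
    by_cases hA : ∀ p ∈ a.primeFactors, p % 4 = 1
    · by_cases hB : ∀ p ∈ b.primeFactors, p % 4 = 1
      · rw [if_pos hA, if_pos hB,
          if_pos (fun p hp => (Finset.mem_union.mp hp).elim (hA p) (hB p)), pow_add]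
      · have hU : ¬∀ p ∈ a.primeFactors ∪ b.primeFactors, p % 4 = 1 :=
          fun hAB => hB fun p hp => hAB p (Finset.mem_union_right _ hp)
        rw [if_pos hA, if_neg hB, if_neg hU, mul_zero]
    · have hU : ¬∀ p ∈ a.primeFactors ∪ b.primeFactors, p % 4 = 1 :=
        fun hAB => hA fun p hp => hAB p (Finset.mem_union_left _ hp)
      rw [if_neg hA, if_neg hU, zero_mul]

lemma exists_rep {n : ℕ} (hodd : Odd n) {s : ℤ} (hs : (n : ℤ) ∣ s ^ 2 + 1) :
    ∃ a b : ℤ, IsCoprime a b ∧ a ^ 2 + b ^ 2 = (n : ℤ) ∧ (n : ℤ) ∣ a - s * b := by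
  classical
  set z : GaussianInt := ⟨s, 1⟩ with hz
  set d : GaussianInt := EuclideanDomain.gcd (n : GaussianInt) z with hd
  have hdn : d ∣ (n : GaussianInt) := EuclideanDomain.gcd_dvd_left _ _
  have hdz : d ∣ z := EuclideanDomain.gcd_dvd_right _ _
  have hbez : d = (n : GaussianInt) * EuclideanDomain.gcdA (n : GaussianInt) z
      + z * EuclideanDomain.gcdB (n : GaussianInt) z :=
    EuclideanDomain.gcd_eq_gcd_ab _ _
  set u := EuclideanDomain.gcdA (n : GaussianInt) z
  set v := EuclideanDomain.gcdB (n : GaussianInt) z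
  obtain ⟨c, hc⟩ := hs
  have hzz : z * star z = ((s ^ 2 + 1 : ℤ) : GaussianInt) := by
    rw [← Zsqrtd.norm_eq_mul_conj]
    congr 1
    rw [Zsqrtd.norm_def, hz]
    ring
  -- n ∣ z * star d
  have hnzd : (n : GaussianInt) ∣ z * star d := by
    have hstar : star d = (n : GaussianInt) * star u + star z * star v := by
      rw [hbez]
      simp [star_add, star_mul, star_intCast, mul_comm]
    rw [hstar, mul_add, ← mul_assoc z (star z) (star v), hzz]
    apply dvd_add
    · exact ⟨z * star u, by ring⟩
    · rw [hc]
      push_cast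
      exact ⟨c * star v, by ring⟩
  -- n ∣ d * star d
  have hndd : (n : GaussianInt) ∣ d * star d := by
    calc (n : GaussianInt) ∣ (n : GaussianInt) * (u * star d) + v * (z * star d) := by
          apply dvd_add (dvd_mul_right _ _) (Dvd.dvd.mul_left hnzd v)
      _ = d * star d := by rw [hbez]; ring
  -- IsCoprime d (star d)
  have hdd : IsCoprime d (star d) := by
    rw [← EuclideanDomain.gcd_isUnit_iff]
    set g := EuclideanDomain.gcd d (star d) with hg
    have hg2 : g ∣ (2 : GaussianInt) := by
      have h1 : g ∣ z - star z := dvd_sub ((EuclideanDomain.gcd_dvd_left _ _).trans hdz)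
        ((EuclideanDomain.gcd_dvd_right _ _).trans (map_dvd (starRingEnd _) hdz))
      have h2 : z - star z = (⟨0, 2⟩ : GaussianInt) := by
        rw [hz]; ext <;> simp
      have h3 : (⟨0, 2⟩ : GaussianInt) * ⟨0, -1⟩ = 2 := by ext <;> simp
      calc g ∣ (⟨0, 2⟩ : GaussianInt) := h2 ▸ h1
        _ ∣ 2 := ⟨⟨0, -1⟩, h3.symm⟩
    have hgn : g ∣ (n : GaussianInt) := (EuclideanDomain.gcd_dvd_left _ _).trans hdn
    have h2n : IsCoprime (2 : GaussianInt) (n : GaussianInt) := by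
      have : IsCoprime (2 : ℤ) (n : ℤ) := by
        rw [Int.isCoprime_iff_gcd_eq_one]
        have h2 : ((2 : ℕ) : ℤ) = (2 : ℤ) := by norm_num
        rw [← h2, Int.gcd_natCast_natCast]
        exact (Nat.Prime.coprime_iff_not_dvd Nat.prime_two).mpr
          (fun hdvd => by rw [Nat.odd_iff] at hodd; omega)
      have := this.map (Int.castRingHom GaussianInt)
      simpa using this
    exact h2n.isUnit_of_dvd' hg2 hgn
  -- d * star d ∣ n
  have hsdn : star d ∣ (n : GaussianInt) := by
    have := map_dvd (starRingEnd GaussianInt) hdn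
    rw [map_natCast] at this; exact this
  have hddn : d * star d ∣ (n : GaussianInt) := by
    obtain ⟨m, hm⟩ := id hdn
    obtain ⟨m', hm'⟩ : star d ∣ m := by
      apply (hdd.symm).dvd_of_dvd_mul_left
      rw [← hm]
      exact hsdn
    exact ⟨m', by rw [hm, hm']; ring⟩
  -- norm d = n
  have hnorm : Zsqrtd.norm d = (n : ℤ) := by
    apply Int.dvd_antisymm (Zsqrtd.norm_nonneg (by norm_num) d) (Int.natCast_nonneg n)
    · rw [← Zsqrtd.intCast_dvd_intCast (d := -1)]
      calc ((Zsqrtd.norm d : ℤ) : GaussianInt) = d * star d := Zsqrtd.norm_eq_mul_conj d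
        _ ∣ (n : GaussianInt) := hddn
    · rw [← Zsqrtd.intCast_dvd_intCast (d := -1)]
      calc (n : GaussianInt) ∣ d * star d := hndd
        _ = ((Zsqrtd.norm d : ℤ) : GaussianInt) := (Zsqrtd.norm_eq_mul_conj d).symm
  refine ⟨d.re, d.im, ?_, ?_, ?_⟩
  · rw [Int.isCoprime_iff_gcd_eq_one]
    have hgd : (((Int.gcd d.re d.im : ℕ) : ℤ) : GaussianInt) ∣ d := by
      rw [Zsqrtd.intCast_dvd]
      exact ⟨Int.gcd_dvd_left _ _, Int.gcd_dvd_right _ _⟩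
    have : (((Int.gcd d.re d.im : ℕ) : ℤ) : GaussianInt) ∣ z := hgd.trans hdz
    rw [Zsqrtd.intCast_dvd] at this
    have h1 : ((Int.gcd d.re d.im : ℕ) : ℤ) ∣ (1 : ℤ) := by
      have := this.2
      simpa [hz] using this
    have : (Int.gcd d.re d.im) ∣ 1 := by exact_mod_cast h1
    exact Nat.dvd_one.mp this
  · rw [← hnorm, Zsqrtd.norm_def]; ring
  · obtain ⟨w, hw⟩ := hdz
    have : (n : GaussianInt) ∣ z * star d := by
      refine ⟨w, ?_⟩
      have h5 : ((Zsqrtd.norm d : ℤ) : GaussianInt) = d * star d := Zsqrtd.norm_eq_mul_conj d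
      rw [hw]
      rw [hnorm] at h5
      push_cast at h5
      rw [h5]
      ring
    have hcast : ((n : ℤ) : GaussianInt) = ((n : ℕ) : GaussianInt) := by push_cast; ring
    rw [← hcast, Zsqrtd.intCast_dvd] at this
    have h6 := this.2
    have h7 : (z * star d).im = d.re - s * d.im := by
      simp [hz, Zsqrtd.im_mul, Zsqrtd.re_star, Zsqrtd.im_star]
      ring
    rwa [h7] at h6

lemma fiber_lemma {n : ℕ} (hn : (n : ℤ) ≠ 0) {a b c d : ℤ}
    (h1 : a ^ 2 + b ^ 2 = (n : ℤ)) (h2 : c ^ 2 + d ^ 2 = (n : ℤ))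
    (hdvd : (n : ℤ) ∣ b * c - a * d) :
    (c = a ∧ d = b) ∨ (c = -b ∧ d = a) ∨ (c = -a ∧ d = -b) ∨ (c = b ∧ d = -a) := by
  obtain ⟨t, ht⟩ := hdvd
  have hid : (a * c + b * d) ^ 2 + ((n : ℤ) * t) ^ 2 = (n : ℤ) ^ 2 := by
    rw [← ht]
    linear_combination (c ^ 2 + d ^ 2) * h1 + (n : ℤ) * h2
  rcases eq_or_ne t 0 with rfl | ht0
  · have hz : ((a * c + b * d) - n) * ((a * c + b * d) + n) = 0 := by linear_combination hid
    have ht' : b * c - a * d = 0 := by rw [ht]; ring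
    rcases mul_eq_zero.mp hz with hu | hu
    · left
      constructor
      · apply mul_left_cancel₀ hn
        linear_combination (-c) * h1 + a * hu + b * ht'
      · apply mul_left_cancel₀ hn
        linear_combination (-d) * h1 + b * hu - a * ht'
    · right; right; left
      constructor
      · apply mul_left_cancel₀ hn
        linear_combination (-c) * h1 + a * hu + b * ht'
      · apply mul_left_cancel₀ hn
        linear_combination (-d) * h1 + b * hu - a * ht'
  · have ht2 : 1 ≤ t ^ 2 := by
      rcases lt_or_gt_of_ne ht0 with h | h <;> nlinarith
    have hn2 : 0 < (n : ℤ) ^ 2 := by positivity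
    have hu0 : a * c + b * d = 0 := by nlinarith [sq_nonneg (a * c + b * d)]
    have ht1 : t ^ 2 = 1 := by nlinarith
    have : (t - 1) * (t + 1) = 0 := by linear_combination ht1
    rcases mul_eq_zero.mp this with h | h
    · have ht' : t = 1 := by linarith
      subst ht'
      right; right; right
      constructor
      · apply mul_left_cancel₀ hn
        linear_combination (-c) * h1 + a * hu0 + b * ht
      · apply mul_left_cancel₀ hn
        linear_combination (-d) * h1 + b * hu0 - a * ht
    · have ht' : t = -1 := by linarith
      subst ht'
      right; left
      constructor
      · apply mul_left_cancel₀ hn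
        linear_combination (-c) * h1 + a * hu0 + b * ht
      · apply mul_left_cancel₀ hn
        linear_combination (-d) * h1 + b * hu0 - a * ht

abbrev Srep (n : ℕ) := {p : ℤ × ℤ // IsCoprime p.1 p.2 ∧ p.1 ^ 2 + p.2 ^ 2 = (n : ℤ)}

namespace Srep

variable {n : ℕ}

lemma sum_zmod (z : Srep n) : ((z.1.1 : ZMod n)) ^ 2 + ((z.1.2 : ZMod n)) ^ 2 = 0 := by
  have h := z.2.2
  have : ((z.1.1 ^ 2 + z.1.2 ^ 2 : ℤ) : ZMod n) = (((n : ℤ)) : ZMod n) := by rw [h]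
  push_cast at this
  rw [this]
  simp

lemma unit_b (z : Srep n) : IsUnit ((z.1.2 : ZMod n)) := by
  obtain ⟨u, v, huv⟩ := z.2.1
  have e1 : (u : ZMod n) * (z.1.1 : ZMod n) + (v : ZMod n) * (z.1.2 : ZMod n) = 1 := by
    have : ((u * z.1.1 + v * z.1.2 : ℤ) : ZMod n) = ((1 : ℤ) : ZMod n) := by rw [huv]
    push_cast at this
    exact this
  have e2 := sum_zmod z
  apply IsUnit.of_mul_eq_one
    (-(u : ZMod n) ^ 2 * (z.1.2 : ZMod n) + 2 * u * v * (z.1.1 : ZMod n) + (v:ZMod n) ^ 2 * (z.1.2 : ZMod n))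
  linear_combination ((u : ZMod n) * z.1.1 + (v : ZMod n) * z.1.2 + 1) * e1 - (u : ZMod n) ^ 2 * e2

lemma unit_a (z : Srep n) : IsUnit ((z.1.1 : ZMod n)) := by
  obtain ⟨u, v, huv⟩ := z.2.1
  have e1 : (u : ZMod n) * (z.1.1 : ZMod n) + (v : ZMod n) * (z.1.2 : ZMod n) = 1 := by
    have : ((u * z.1.1 + v * z.1.2 : ℤ) : ZMod n) = ((1 : ℤ) : ZMod n) := by rw [huv]
    push_cast at this
    exact this
  have e2 := sum_zmod z
  apply IsUnit.of_mul_eq_one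
    (-(v : ZMod n) ^ 2 * (z.1.1 : ZMod n) + 2 * u * v * (z.1.2 : ZMod n) + (u:ZMod n) ^ 2 * (z.1.1 : ZMod n))
  linear_combination ((u : ZMod n) * z.1.1 + (v : ZMod n) * z.1.2 + 1) * e1 - (v : ZMod n) ^ 2 * e2

noncomputable def phi (z : Srep n) : ZMod n := (z.1.1 : ZMod n) * (z.1.2 : ZMod n)⁻¹

lemma phi_spec (z : Srep n) : phi z * (z.1.2 : ZMod n) = (z.1.1 : ZMod n) := by
  have h := ZMod.inv_mul_of_unit _ (unit_b z)
  calc phi z * (z.1.2 : ZMod n) = (z.1.1 : ZMod n) * ((z.1.2 : ZMod n)⁻¹ * (z.1.2 : ZMod n)) := by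
        rw [phi]; ring
    _ = (z.1.1 : ZMod n) := by rw [h, mul_one]

lemma phi_sq (z : Srep n) : phi z ^ 2 = -1 := by
  have hb := unit_b z
  have hb2 : IsUnit ((z.1.2 : ZMod n) ^ 2) := hb.pow 2
  apply hb2.mul_left_cancel
  have h1 := phi_spec z
  have h2 := sum_zmod z
  calc (z.1.2 : ZMod n) ^ 2 * phi z ^ 2 = (phi z * (z.1.2 : ZMod n)) ^ 2 := by ring
    _ = (z.1.1 : ZMod n) ^ 2 := by rw [h1]
    _ = (z.1.2 : ZMod n) ^ 2 * (-1) := by linear_combination h2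

def rot (z : Srep n) : Srep n :=
  ⟨(-z.1.2, z.1.1), z.2.1.symm.neg_left, by have := z.2.2; simp only; linear_combination this⟩

lemma rot_val (z : Srep n) : (rot z).1 = (-z.1.2, z.1.1) := rfl

lemma phi_rot (z : Srep n) : phi (rot z) = phi z := by
  have ha := unit_a z
  have hb := unit_b z
  apply (ha.mul hb).mul_left_cancel
  have h1 := phi_spec z
  have h2 := phi_spec (rot z)
  have h3 := sum_zmod z
  have hval1 : ((rot z).1.1 : ZMod n) = -(z.1.2 : ZMod n) := by rw [rot_val]; push_cast; ring
  have hval2 : ((rot z).1.2 : ZMod n) = (z.1.1 : ZMod n) := by rw [rot_val]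
  rw [hval1, hval2] at h2
  calc (z.1.1 : ZMod n) * (z.1.2 : ZMod n) * phi (rot z)
      = (z.1.2 : ZMod n) * (phi (rot z) * (z.1.1 : ZMod n)) := by ring
    _ = (z.1.2 : ZMod n) * (-(z.1.2 : ZMod n)) := by rw [h2]
    _ = (z.1.1 : ZMod n) * (z.1.1 : ZMod n) := by linear_combination -h3
    _ = (z.1.1 : ZMod n) * (z.1.2 : ZMod n) * phi z := by
        nth_rewrite 2 [← h1]
        ring

lemma rot_injective : Function.Injective (rot (n := n)) := by
  intro z w h
  have h1 := congrArg (fun t : Srep n => t.1.1) h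
  have h2 := congrArg (fun t : Srep n => t.1.2) h
  simp only [rot_val] at h1 h2
  apply Subtype.ext
  apply Prod.ext
  · exact h2
  · exact neg_injective h1

lemma phi_rot_iter (m : ℕ) (z : Srep n) : phi (rot^[m] z) = phi z := by
  induction m with
  | zero => rfl
  | succ m ih => rw [Function.iterate_succ_apply', phi_rot, ih]

lemma rot_iter_ne (hn : n ≠ 0) (z : Srep n) {m : ℕ} (hm1 : 0 < m) (hm2 : m < 4) :
    rot^[m] z ≠ z := by
  have hzero : ¬(z.1.1 = 0 ∧ z.1.2 = 0) := by
    rintro ⟨h1, h2⟩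
    have := z.2.2
    rw [h1, h2] at this
    simp at this
    exact hn (by exact_mod_cast this.symm)
  interval_cases m
  · intro h
    have h' : rot z = z := h
    have h1 := congrArg (fun t : Srep n => t.1.1) h'
    have h2 := congrArg (fun t : Srep n => t.1.2) h'
    simp only [rot_val] at h1 h2
    exact hzero ⟨by omega, by omega⟩
  · intro h
    have h' : rot (rot z) = z := h
    have h1 := congrArg (fun t : Srep n => t.1.1) h'
    have h2 := congrArg (fun t : Srep n => t.1.2) h'
    simp only [rot_val] at h1 h2
    exact hzero ⟨by omega, by omega⟩
  · intro h
    have h' : rot (rot (rot z)) = z := h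
    have h1 := congrArg (fun t : Srep n => t.1.1) h'
    have h2 := congrArg (fun t : Srep n => t.1.2) h'
    simp only [rot_val] at h1 h2
    exact hzero ⟨by omega, by omega⟩

end Srep

lemma rot_iter_inj {n : ℕ} (hn : n ≠ 0) (z : Srep n) {k j : ℕ} (hk : k < 4) (hj : j < 4)
    (h : Srep.rot^[k] z = Srep.rot^[j] z) : k = j := by
  rcases le_total k j with hle | hle
  · obtain ⟨m, rfl⟩ : ∃ m, j = m + k := ⟨j - k, by omega⟩
    rw [Function.iterate_add_apply] at h
    by_contra hne
    exact Srep.rot_iter_ne hn (Srep.rot^[k] z) (by omega) (by omega) h.symm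
  · obtain ⟨m, rfl⟩ : ∃ m, k = m + j := ⟨k - j, by omega⟩
    rw [Function.iterate_add_apply] at h
    by_contra hne
    exact Srep.rot_iter_ne hn (Srep.rot^[j] z) (by omega) (by omega) h

lemma card_Srep {n : ℕ} (hodd : Odd n) :
    Nat.card {p : ℤ × ℤ // IsCoprime p.1 p.2 ∧ p.1 ^ 2 + p.2 ^ 2 = (n : ℤ)} =
    4 * Nat.card {x : ZMod n // x ^ 2 = -1} := by
  have hn0 : n ≠ 0 := by rintro rfl; simp [Nat.odd_iff] at hodd
  have hnZ : (n : ℤ) ≠ 0 := by exact_mod_cast hn0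
  haveI : NeZero n := ⟨hn0⟩
  have hsig : ∀ x : {x : ZMod n // x ^ 2 = -1}, ∃ z : Srep n, Srep.phi z = x.1 := by
    rintro ⟨x, hx⟩
    set s : ℤ := (x.val : ℤ) with hs
    have hsx : ((s : ZMod n)) = x := by
      rw [hs]
      push_cast
      exact ZMod.natCast_rightInverse x
    have hdvd : (n : ℤ) ∣ s ^ 2 + 1 := by
      rw [← ZMod.intCast_zmod_eq_zero_iff_dvd]
      push_cast
      rw [hsx]
      linear_combination hx
    obtain ⟨a, b, hco, hsum, hab⟩ := exists_rep hodd hdvd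
    refine ⟨⟨(a, b), hco, hsum⟩, ?_⟩
    set z : Srep n := ⟨(a, b), hco, hsum⟩ with hzdef
    have hb := Srep.unit_b z
    apply hb.mul_left_cancel
    have h1 := Srep.phi_spec z
    have h2 : ((a : ZMod n)) = x * (b : ZMod n) := by
      have h0 : ((a - s * b : ℤ) : ZMod n) = 0 := by
        rw [ZMod.intCast_zmod_eq_zero_iff_dvd]; exact hab
      push_cast at h0
      rw [hsx] at h0
      linear_combination h0
    have hval1 : (z.1.1 : ZMod n) = (a : ZMod n) := rfl
    have hval2 : (z.1.2 : ZMod n) = (b : ZMod n) := rfl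
    calc (z.1.2 : ZMod n) * Srep.phi z = Srep.phi z * (z.1.2 : ZMod n) := by ring
      _ = (z.1.1 : ZMod n) := h1
      _ = x * (b : ZMod n) := by rw [hval1, h2]
      _ = (z.1.2 : ZMod n) * x := by rw [hval2]; ring
  choose σ hσ using hsig
  have hbij : Function.Bijective
      (fun y : {x : ZMod n // x ^ 2 = -1} × Fin 4 => Srep.rot^[y.2.val] (σ y.1)) := by
    constructor
    · rintro ⟨x, k⟩ ⟨y, j⟩ h
      have h' : Srep.rot^[k.val] (σ x) = Srep.rot^[j.val] (σ y) := h
      have hphi : x.1 = y.1 := by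
        rw [← hσ x, ← hσ y, ← Srep.phi_rot_iter k.val (σ x), ← Srep.phi_rot_iter j.val (σ y), h']
      have hxy : x = y := Subtype.ext hphi
      subst hxy
      have hk : k = j := Fin.ext (rot_iter_inj hn0 (σ x) k.2 j.2 h')
      rw [hk]
    · intro z
      set x : {x : ZMod n // x ^ 2 = -1} := ⟨Srep.phi z, Srep.phi_sq z⟩ with hx
      have hphi : Srep.phi (σ x) = Srep.phi z := hσ x
      set w := σ x with hw
      have h1 := w.2.2
      have h2 := z.2.2
      have hdvd : (n : ℤ) ∣ w.1.2 * z.1.1 - w.1.1 * z.1.2 := by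
        rw [← ZMod.intCast_zmod_eq_zero_iff_dvd]
        push_cast
        have e1 := Srep.phi_spec w
        have e2 := Srep.phi_spec z
        rw [hphi] at e1
        linear_combination (z.1.2 : ZMod n) * e1 - (w.1.2 : ZMod n) * e2
      rcases fiber_lemma hnZ h1 h2 hdvd with ⟨hc, hd⟩ | ⟨hc, hd⟩ | ⟨hc, hd⟩ | ⟨hc, hd⟩
      · refine ⟨(x, ⟨0, by norm_num⟩), ?_⟩
        show Srep.rot^[0] w = z
        exact Subtype.ext (Prod.ext hc.symm hd.symm)
      · refine ⟨(x, ⟨1, by norm_num⟩), ?_⟩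
        show Srep.rot w = z
        refine Subtype.ext (Prod.ext ?_ ?_)
        · show -(w.1.2) = z.1.1
          omega
        · show w.1.1 = z.1.2
          omega
      · refine ⟨(x, ⟨2, by norm_num⟩), ?_⟩
        show Srep.rot (Srep.rot w) = z
        refine Subtype.ext (Prod.ext ?_ ?_)
        · show -(w.1.1) = z.1.1
          omega
        · show -(w.1.2) = z.1.2
          omega
      · refine ⟨(x, ⟨3, by norm_num⟩), ?_⟩
        show Srep.rot (Srep.rot (Srep.rot w)) = z
        refine Subtype.ext (Prod.ext ?_ ?_)
        · show - -(w.1.2) = z.1.1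
          omega
        · show -(w.1.1) = z.1.2
          omega
  have hcard := Nat.card_congr (Equiv.ofBijective _ hbij)
  rw [Nat.card_prod] at hcard
  rw [← hcard, Nat.card_eq_fintype_card (α := Fin 4), Fintype.card_fin]
  ring

theorem stmt_7 (n : ℕ) (hodd : Odd n) :
    Nat.card {p : ℤ × ℤ // IsCoprime p.1 p.2 ∧ p.1 ^ 2 + p.2 ^ 2 = (n : ℤ)} =
    if ∀ p ∈ n.primeFactors, p % 4 = 1 then 4 * 2 ^ n.primeFactors.card else 0 := by
  rw [card_Srep hodd, cardR n hodd]
  split_ifs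
  · rfl
  · rfl
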